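/- Let G be an unsorted unsigned linear genome containing both edges {0,1} and {1,2}. Then pdcj(G) > b(G), i.e., the prefix DCJ distance strictly exceeds the number of breakpoints. -/

import Mathlib

open Classical

/-- The (multiset of) edges of the path visiting the vertices of `l` in order. -/
def pathEdges (l : List ℕ) : Multiset (Sym2 ℕ) :=
  ↑((l.zip l.tail).map fun p => s(p.1, p.2))

/-- `G` is a linear genome on {0,…,n+1}: a Hamiltonian path on {0,…,n+1}
with endpoints 0 and n+1 (genomes are multisets of edges). -/
def IsLinearGenome (n : ℕ) (G : Multiset (Sym2 ℕ)) : Prop :=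
  ∃ l : List ℕ, l.Perm (List.range (n+2)) ∧ l.head? = some 0 ∧
    l.getLast? = some (n+1) ∧ G = pathEdges l

/-- The identity genome 0−1−⋯−(n+1). -/
def identityGenome (n : ℕ) : Multiset (Sym2 ℕ) := pathEdges (List.range (n+2))

/-- `e` is a breakpoint of `G`: 0 ∉ e, and either its endpoints are not
consecutive integers or it has multiplicity at least two in `G`. -/
def IsBp (G : Multiset (Sym2 ℕ)) (e : Sym2 ℕ) : Prop :=
  (∀ x ∈ e, x ≠ 0) ∧ (¬ (∃ u, e = s(u, u+1)) ∨ 2 ≤ G.count e)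

/-- The number of breakpoints of `G` (counted with multiplicity). -/
noncomputable def bp (G : Multiset (Sym2 ℕ)) : ℕ :=
  (G.filter fun e => IsBp G e).card

/-- Prefix DCJ: cut the edge {0,v} containing 0 and another edge {w,x},
and rejoin the four severed endpoints in one of the two alternative ways. -/
def PrefixDCJ (G G' : Multiset (Sym2 ℕ)) : Prop :=
  ∃ v w x, s(0, v) ∈ G ∧ s(w, x) ∈ G.erase s(0, v) ∧
    (G' = ((G.erase s(0, v)).erase s(w, x)) + {s(0, w), s(v, x)} ∨
     G' = ((G.erase s(0, v)).erase s(w, x)) + {s(0, x), s(v, w)})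

/-- `reachIn R k a b`: `b` is obtained from `a` by exactly `k` steps of `R`. -/
def reachIn {α : Type*} (R : α → α → Prop) : ℕ → α → α → Prop
  | 0, a, b => a = b
  | (k+1), a, b => ∃ c, R a c ∧ reachIn R k c b

/-! ### Auxiliary development -/

noncomputable def bpF (H : Multiset (Sym2 ℕ)) : Finset (Sym2 ℕ) :=
  H.toFinset.filter fun e => IsBp H e

lemma mem_pathEdges {l : List ℕ} {e : Sym2 ℕ} :
    e ∈ pathEdges l ↔ ∃ i : ℕ, ∃ _h : i + 1 < l.length, e = s(l[i], l[i + 1]) := by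
  unfold pathEdges
  rw [Multiset.mem_coe, List.mem_map]
  constructor
  · rintro ⟨p, hp, rfl⟩
    rw [List.mem_iff_getElem] at hp
    obtain ⟨i, hi, hp⟩ := hp
    have hil : i + 1 < l.length := by
      simp only [List.length_zip, List.length_tail, lt_min_iff] at hi
      omega
    refine ⟨i, hil, ?_⟩
    rw [← hp]
    simp [List.getElem_zip, List.getElem_tail]
  · rintro ⟨i, hi, rfl⟩
    refine ⟨(l[i], l[i+1]'hi), ?_, rfl⟩
    rw [List.mem_iff_getElem]
    refine ⟨i, ?_, ?_⟩
    · simp only [List.length_zip, List.length_tail, lt_min_iff]; omega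
    · simp [List.getElem_zip, List.getElem_tail]

lemma pathEdges_nodup {l : List ℕ} (hl : l.Nodup) :
    ((l.zip l.tail).map fun p => s(p.1, p.2)).Nodup := by
  rw [List.Nodup, List.pairwise_iff_getElem]
  intro i j hi hj hij
  simp only [List.length_map, List.length_zip, List.length_tail, lt_min_iff] at hi hj
  have hi1 : i + 1 < l.length := by omega
  have hj1 : j + 1 < l.length := by omega
  have hlen : ∀ m : ℕ, m + 1 < l.length →
      m < ((l.zip l.tail).map fun p => s(p.1, p.2)).length := by
    intro m hm
    simp only [List.length_map, List.length_zip, List.length_tail, lt_min_iff]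
    omega
  have hgi : ((l.zip l.tail).map fun p => s(p.1, p.2))[i]'(hlen i hi1) =
      s(l[i], l[i+1]) := by
    simp [List.getElem_zip, List.getElem_tail]
  have hgj : ((l.zip l.tail).map fun p => s(p.1, p.2))[j]'(hlen j hj1) =
      s(l[j], l[j+1]) := by
    simp [List.getElem_zip, List.getElem_tail]
  rw [hgi, hgj]
  intro hEq
  rw [Sym2.eq_iff] at hEq
  rcases hEq with ⟨h1, _⟩ | ⟨h1, h2⟩
  · exact absurd (hl.getElem_inj_iff.mp h1) (by omega)
  · have := hl.getElem_inj_iff.mp h1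
    have := hl.getElem_inj_iff.mp h2
    omega

lemma isBp_mono {H H' : Multiset (Sym2 ℕ)} {e : Sym2 ℕ}
    (h : IsBp H e) (hc : H.count e ≤ H'.count e) : IsBp H' e :=
  ⟨h.1, h.2.imp id fun h2 => le_trans h2 hc⟩

lemma mem_bpF {H : Multiset (Sym2 ℕ)} {e : Sym2 ℕ} :
    e ∈ bpF H ↔ e ∈ H ∧ IsBp H e := by
  simp [bpF, Multiset.mem_toFinset]

lemma zero_not_bp {H : Multiset (Sym2 ℕ)} {a : ℕ} {e : Sym2 ℕ} (h : IsBp H e) :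
    e ≠ s(0, a) := by
  intro rfl_; subst rfl_
  exact h.1 0 (by simp) rfl

/-- Per-step: a prefix DCJ destroys at most one breakpoint class. -/
lemma step_bpF {H H' : Multiset (Sym2 ℕ)} (h : PrefixDCJ H H') :
    (bpF H).card ≤ (bpF H').card + 1 := by
  obtain ⟨v, w, x, hv, hwx, hc⟩ := h
  have key : ∀ a b : Sym2 ℕ, H' = ((H.erase s(0, v)).erase s(w, x)) + {a, b} →
      bpF H ⊆ insert s(w, x) (bpF H') := by
    intro a b hH' e he
    rw [Finset.mem_insert]
    by_cases hew : e = s(w, x)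
    · exact Or.inl hew
    · right
      rw [mem_bpF] at he ⊢
      have he0 : e ≠ s(0, v) := zero_not_bp he.2
      have hcount : H.count e ≤ H'.count e := by
        rw [hH', Multiset.count_add, Multiset.count_erase_of_ne hew,
          Multiset.count_erase_of_ne he0]
        exact Nat.le_add_right _ _
      have hmem : e ∈ H' :=
        Multiset.count_pos.mp (lt_of_lt_of_le (Multiset.count_pos.mpr he.1) hcount)
      exact ⟨hmem, isBp_mono he.2 hcount⟩
  have hsub : bpF H ⊆ insert s(w, x) (bpF H') := by
    rcases hc with hc | hc
    · exact key _ _ hc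
    · exact key _ _ hc
  calc (bpF H).card ≤ (insert s(w, x) (bpF H')).card := Finset.card_le_card hsub
    _ ≤ (bpF H').card + 1 := Finset.card_insert_le _ _

lemma identity_count {n : ℕ} {e : Sym2 ℕ} (he : e ∈ identityGenome n) :
    (identityGenome n).count e = 1 := by
  have hnd : (identityGenome n).Nodup := by
    rw [identityGenome, pathEdges, Multiset.coe_nodup]
    exact pathEdges_nodup List.nodup_range
  exact Multiset.count_eq_one_of_mem hnd he

lemma bpF_identity (n : ℕ) : bpF (identityGenome n) = ∅ := by
  rw [Finset.eq_empty_iff_forall_notMem]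
  intro e he
  rw [mem_bpF] at he
  obtain ⟨hmem, hbp⟩ := he
  have := mem_pathEdges.mp hmem
  obtain ⟨i, hi, rfl⟩ := this
  rcases hbp.2 with h | h
  · exact h ⟨(List.range (n+2))[i], by simp⟩
  · rw [identity_count hmem] at h; omega

lemma reach_bpF {n : ℕ} : ∀ (m : ℕ) (H : Multiset (Sym2 ℕ)),
    reachIn PrefixDCJ m H (identityGenome n) → (bpF H).card ≤ m := by
  intro m
  induction m with
  | zero => intro H h; rw [show H = identityGenome n from h, bpF_identity]; simp
  | succ m ih =>
    intro H h
    obtain ⟨c, hHc, hrest⟩ := h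
    have h1 := step_bpF hHc
    have h2 := ih c hrest
    omega

/-! ### Facts about the initial genome -/

lemma genome_facts {n : ℕ} {G : Multiset (Sym2 ℕ)} (hG : IsLinearGenome n G)
    (h01 : s(0, 1) ∈ G) (h12 : s(1, 2) ∈ G) :
    G.Nodup ∧ (∀ y, s(0, y) ∈ G → y = 1) ∧ (∀ y, s(1, y) ∈ G → y = 0 ∨ y = 2) := by
  obtain ⟨l, hperm, hhead, _, rfl⟩ := hG
  have hnd : l.Nodup := hperm.nodup_iff.mpr List.nodup_range
  have hpos : 0 < l.length := by
    cases l with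
    | nil => simp at hhead
    | cons a t => simp
  have h0 : l[0] = 0 := by
    cases l with
    | nil => simp at hhead
    | cons a t => simpa using hhead
  have huniq : ∀ i : ℕ, ∀ hi : i < l.length, l[i] = 0 → i = 0 := by
    intro i hi h
    exact hnd.getElem_inj_iff.mp (h.trans h0.symm)
  -- l[1] = 1
  obtain ⟨i1, hi1, he1⟩ := mem_pathEdges.mp h01
  have h1 : ∃ h : 1 < l.length, l[1] = 1 := by
    rcases Sym2.eq_iff.mp he1.symm with ⟨ha, hb⟩ | ⟨ha, hb⟩
    · have : i1 = 0 := huniq i1 (by omega) ha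
      subst this
      exact ⟨hi1, hb⟩
    · exact absurd (huniq (i1+1) hi1 hb) (by omega)
  obtain ⟨hlen1, h1⟩ := h1
  have huniq1 : ∀ i : ℕ, ∀ hi : i < l.length, l[i] = 1 → i = 1 := by
    intro i hi h
    exact hnd.getElem_inj_iff.mp (h.trans h1.symm)
  -- l[2] = 2
  obtain ⟨i2, hi2, he2⟩ := mem_pathEdges.mp h12
  have h2 : ∃ h : 2 < l.length, l[2] = 2 := by
    rcases Sym2.eq_iff.mp he2.symm with ⟨ha, hb⟩ | ⟨ha, hb⟩
    · have : i2 = 1 := huniq1 i2 (by omega) ha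
      subst this
      exact ⟨hi2, hb⟩
    · have : i2 + 1 = 1 := huniq1 (i2+1) hi2 hb
      have hi20 : i2 = 0 := by omega
      subst hi20
      rw [h0] at ha
      exact absurd ha.symm (by norm_num)
  obtain ⟨hlen2, h2⟩ := h2
  refine ⟨?_, ?_, ?_⟩
  · rw [pathEdges, Multiset.coe_nodup]
    exact pathEdges_nodup hnd
  · intro y hy
    obtain ⟨i, hi, he⟩ := mem_pathEdges.mp hy
    rcases Sym2.eq_iff.mp he.symm with ⟨ha, hb⟩ | ⟨ha, hb⟩
    · have : i = 0 := huniq i (by omega) ha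
      subst this
      rw [← hb, h1]
    · exact absurd (huniq (i+1) hi hb) (by omega)
  · intro y hy
    obtain ⟨i, hi, he⟩ := mem_pathEdges.mp hy
    rcases Sym2.eq_iff.mp he.symm with ⟨ha, hb⟩ | ⟨ha, hb⟩
    · have : i = 1 := huniq1 i (by omega) ha
      subst this
      right; rw [← hb, h2]
    · have : i + 1 = 1 := huniq1 (i+1) hi hb
      have hi0 : i = 0 := by omega
      subst hi0
      left; rw [← ha, h0]

lemma not_consec_s11 : ¬ ∃ u : ℕ, s(1, 1) = s(u, u+1) := by
  rintro ⟨u, hu⟩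
  rcases Sym2.eq_iff.mp hu with ⟨ha, hb⟩ | ⟨ha, hb⟩ <;> omega

/-- Key first-step lemma: from a genome containing both s(0,1) and s(1,2),
a prefix DCJ cannot decrease the number of breakpoint classes. -/
lemma first_step_aux {G G' : Multiset (Sym2 ℕ)} {w x : ℕ}
    (hnd : G.Nodup) (h12 : s(1, 2) ∈ G)
    (hB : ∀ y, s(1, y) ∈ G → y = 0 ∨ y = 2)
    (hwx : s(w, x) ∈ G.erase s(0, 1))
    (hG' : G' = ((G.erase s(0, 1)).erase s(w, x)) + {s(0, w), s(1, x)}) :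
    (bpF G).card ≤ (bpF G').card := by
  have hcount1 : ∀ e : Sym2 ℕ, G.count e ≤ 1 := by
    intro e
    exact Multiset.nodup_iff_count_le_one.mp hnd e
  -- counts in G' for edges distinct from the two cut edges
  have hcnt : ∀ e : Sym2 ℕ, e ≠ s(0, 1) → e ≠ s(w, x) →
      G'.count e = G.count e + Multiset.count e {s(0, w), s(1, x)} := by
    intro e h1 h2
    rw [hG', Multiset.count_add, Multiset.count_erase_of_ne h2,
      Multiset.count_erase_of_ne h1]
  by_cases hbpwx : IsBp G s(w, x)
  · -- the cut edge was a breakpoint; the new edge s(1,x) is a fresh breakpoint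
    have hw0 : w ≠ 0 := hbpwx.1 w (by simp)
    have hx0 : x ≠ 0 := hbpwx.1 x (by simp)
    have hncons : ¬ ∃ u, s(w, x) = s(u, u+1) := by
      rcases hbpwx.2 with h | h
      · exact h
      · exact absurd h (by have := hcount1 s(w, x); omega)
    -- the new breakpoint class
    set estar : Sym2 ℕ := s(1, x) with hestar
    have hstar_ne01 : estar ≠ s(0, 1) := by
      rw [hestar]
      intro h
      rcases Sym2.eq_iff.mp h with ⟨ha, hb⟩ | ⟨ha, hb⟩ <;> omega
    have hstar_newx : estar ≠ s(w, x) := by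
      rw [hestar]
      intro h
      rcases Sym2.eq_iff.mp h with ⟨ha, hb⟩ | ⟨ha, hb⟩
      · -- w = 1, so s(w,x) = s(1,x) ∈ G ⇒ x ∈ {0,2}
        have hmemG : s(w, x) ∈ G := Multiset.mem_of_mem_erase hwx
        rw [← ha] at hmemG
        rcases hB x hmemG with h' | h'
        · exact hx0 h'
        · subst h'
          refine hncons ⟨1, ?_⟩
          rw [← ha]
      · -- ha : 1 = x, hb : x = w, so w = x = 1
        have hx1 : x = 1 := ha.symm
        have hw1 : w = 1 := by omega
        have hmemG : s(w, x) ∈ G := Multiset.mem_of_mem_erase hwx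
        rw [hw1, hx1] at hmemG
        rcases hB 1 hmemG with h' | h' <;> omega
    have hstar_mem : estar ∈ G' := by
      rw [hG']
      exact Multiset.mem_add.mpr (Or.inr (by simp [hestar]))
    have hstar_bp : IsBp G' estar := by
      constructor
      · intro z hz
        rw [hestar, Sym2.mem_iff] at hz
        rcases hz with rfl | rfl
        · exact one_ne_zero
        · exact hx0
      · by_cases hx2 : x = 2
        · -- estar = s(1,2): multiplicity 2
          right
          subst hx2
          have hG12 : G.count s(1, 2) = 1 := by
            have := hcount1 s(1, 2)
            have := Multiset.count_pos.mpr h12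
            omega
          rw [hcnt s(1, 2) hstar_ne01 hstar_newx, hG12]
          simp [hestar]
        · by_cases hx1 : x = 1
          · left
            subst hx1
            exact not_consec_s11
          · left
            rintro ⟨u, hu⟩
            rcases Sym2.eq_iff.mp hu with ⟨ha, hb⟩ | ⟨ha, hb⟩ <;> omega
    -- an injection
    have hsub : bpF G ⊆ insert s(w, x) ((bpF G').erase estar) := by
      intro e he
      rw [Finset.mem_insert]
      by_cases hew : e = s(w, x)
      · exact Or.inl hew
      · right
        rw [mem_bpF] at he
        have he0 : e ≠ s(0, 1) := zero_not_bp he.2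
        have hne_star : e ≠ estar := by
          intro h
          subst h
          rw [hestar] at he
          rcases hB x he.1 with h' | h'
          · exact hx0 h'
          · subst h'
            rcases he.2.2 with h | h
            · exact h ⟨1, rfl⟩
            · have := hcount1 s(1, 2); omega
        have hcc : G.count e ≤ G'.count e := by
          rw [hcnt e he0 hew]
          exact Nat.le_add_right _ _
        rw [Finset.mem_erase]
        refine ⟨hne_star, ?_⟩
        rw [mem_bpF]
        exact ⟨Multiset.count_pos.mp
          (lt_of_lt_of_le (Multiset.count_pos.mpr he.1) hcc), isBp_mono he.2 hcc⟩
    calc (bpF G).card ≤ (insert s(w, x) ((bpF G').erase estar)).card :=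
          Finset.card_le_card hsub
      _ ≤ ((bpF G').erase estar).card + 1 := Finset.card_insert_le _ _
      _ = (bpF G').card - 1 + 1 := by
          rw [Finset.card_erase_of_mem (mem_bpF.mpr ⟨hstar_mem, hstar_bp⟩)]
      _ ≤ (bpF G').card := by
          have : 0 < (bpF G').card :=
            Finset.card_pos.mpr ⟨estar, mem_bpF.mpr ⟨hstar_mem, hstar_bp⟩⟩
          omega
  · -- the cut edge was not a breakpoint: no breakpoint class is destroyed
    have hsub : bpF G ⊆ bpF G' := by
      intro e he
      rw [mem_bpF] at he ⊢
      have he0 : e ≠ s(0, 1) := zero_not_bp he.2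
      have hew : e ≠ s(w, x) := by
        intro h; subst h; exact hbpwx he.2
      have hcc : G.count e ≤ G'.count e := by
        rw [hcnt e he0 hew]
        exact Nat.le_add_right _ _
      exact ⟨Multiset.count_pos.mp
        (lt_of_lt_of_le (Multiset.count_pos.mpr he.1) hcc), isBp_mono he.2 hcc⟩
    exact Finset.card_le_card hsub


/-- If an unsorted linear genome contains both {0,1} and {1,2}, then its prefix DCJ
distance strictly exceeds its number of breakpoints. -/
theorem pdcj_gt_breakpoints (n : ℕ) (G : Multiset (Sym2 ℕ)) (k : ℕ)
    (hG : IsLinearGenome n G) (hid : G ≠ identityGenome n)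
    (h01 : s(0, 1) ∈ G) (h12 : s(1, 2) ∈ G)
    (h : reachIn PrefixDCJ k G (identityGenome n)) :
    bp G < k := by
  obtain ⟨hnd, hA, hB⟩ := genome_facts hG h01 h12
  cases k with
  | zero => exact absurd h hid
  | succ m =>
    obtain ⟨c, hGc, hrest⟩ := h
    have hc : (bpF c).card ≤ m := reach_bpF m c hrest
    have hstep : (bpF G).card ≤ (bpF c).card := by
      obtain ⟨v, w, x, hv, hwx, hcase⟩ := hGc
      have hv1 : v = 1 := hA v hv
      subst hv1
      rcases hcase with hcase | hcase
      · exact first_step_aux hnd h12 hB hwx hcase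
      · have hswap : s(w, x) = s(x, w) := Sym2.eq_swap
        rw [hswap] at hwx hcase
        exact first_step_aux hnd h12 hB hwx hcase
    have hbp : bp G = (bpF G).card := by
      have h1 : (G.filter fun e => IsBp G e).Nodup := hnd.filter _
      rw [bp, bpF, ← Multiset.toFinset_filter, ← Multiset.toFinset_eq h1]
      rfl
    omega
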